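/- Suppose α is an additively closed ordinal with α < ϑ(ε_{Ω+1}). Then α can be uniquely written as α = ϑ(β), where either β = 0, or β = Ω^{β₁}·γ₁ + … + Ω^{βₙ}·γₙ < ε_{Ω+1} in base-Ω Cantor normal form with β > β₁ > … > βₙ and 0 < γᵢ < Ω, and k(β) < α. -/

import Mathlib

/-- `Ω`, the first uncountable ordinal `ω₁`. -/
noncomputable def Omega1 : Ordinal.{0} := (Cardinal.aleph 1).ord

/-- `KMem β α` expresses `β ∈ K(α)`, where `K(0) = {0}` and, for
`α = Ω^{α₁}·β₁ + … + Ω^{αₙ}·βₙ` in base-`Ω` Cantor normal form,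
`K(α) = {β₁,…,βₙ} ∪ K(α₁) ∪ … ∪ K(αₙ)`. -/
inductive KMem : Ordinal.{0} → Ordinal.{0} → Prop
  | zero : KMem 0 0
  | coeff {α e c : Ordinal.{0}} : (e, c) ∈ Ordinal.CNF Omega1 α → KMem c α
  | expo {α e c β : Ordinal.{0}} : (e, c) ∈ Ordinal.CNF Omega1 α → KMem β e → KMem β α

/-- `k(α) = max K(α)` (as a supremum; `K(α)` is finite for `α < ε_{Ω+1}`). -/
noncomputable def kMax (α : Ordinal.{0}) : Ordinal.{0} := sSup {β | KMem β α}

/-- Membership in `P`, the class of additively closed ordinals `{ω^ξ : ξ ∈ On}`. -/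
def AddClosed (ζ : Ordinal.{0}) : Prop := ∃ ξ : Ordinal.{0}, ζ = Ordinal.omega0 ^ ξ

/-- The collapsing function `ϑ`: `ϑ(α)` is the least `ζ ∈ P` such that `k(α) < ζ` and
for all `β < α` with `k(β) < ζ` one has `ϑ(β) < ζ`. -/
noncomputable def theta : Ordinal.{0} → Ordinal.{0} :=
  Ordinal.lt_wf.fix (C := fun _ => Ordinal.{0}) fun α IH =>
    sInf {ζ : Ordinal.{0} | AddClosed ζ ∧ kMax α < ζ ∧
      ∀ (β : Ordinal.{0}) (h : β < α), kMax β < ζ → IH β h < ζ}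

/-- `ε_{Ω+1}`, the least epsilon number above `Ω`. -/
noncomputable def epsOmega1 : Ordinal.{0} :=
  Ordinal.nfp (fun a => Ordinal.omega0 ^ a) (Omega1 + 1)

/-- The tower `Ω_n[1]`: `Ω_0[1] = 1` and `Ω_{n+1}[1] = Ω ^ Ω_n[1]`. -/
noncomputable def OmegaTower : ℕ → Ordinal.{0}
  | 0 => 1
  | nn + 1 => Omega1 ^ OmegaTower nn

/-- The Howard–Bachmann ordinal `ϑ(ε_{Ω+1}) = sup_{n<ω} ϑ(Ω_n[1])`. -/
noncomputable def HowardBachmann : Ordinal.{0} := ⨆ nn : ℕ, theta (OmegaTower nn)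

open Ordinal in
lemma one_lt_Omega1 : 1 < Omega1 := by
  rw [Omega1, Cardinal.lt_ord, Ordinal.card_one]
  exact lt_of_lt_of_le Cardinal.one_lt_aleph0 (Cardinal.aleph0_le_aleph 1)

lemma Omega1_pos : 0 < Omega1 := lt_trans zero_lt_one one_lt_Omega1

/-- The defining set for `theta`. -/
def Sset (β : Ordinal.{0}) : Set Ordinal.{0} :=
  {ζ : Ordinal.{0} | AddClosed ζ ∧ kMax β < ζ ∧
    ∀ (γ : Ordinal.{0}) (_ : γ < β), kMax γ < ζ → theta γ < ζ}

lemma theta_eq (β : Ordinal.{0}) : theta β = sInf (Sset β) := by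
  show Ordinal.lt_wf.fix _ β = _
  rw [WellFounded.fix_eq]
  rfl

lemma Sset_nonempty (β : Ordinal.{0}) : (Sset β).Nonempty := by
  classical
  set M : Ordinal.{0} := max (kMax β) (sSup (theta '' Set.Iio β)) with hM
  refine ⟨Ordinal.omega0 ^ (Order.succ M), ⟨_, rfl⟩, ?_, ?_⟩
  · exact lt_of_lt_of_le (lt_of_le_of_lt (le_max_left _ _) (Order.lt_succ M))
      (Ordinal.right_le_opow _ Ordinal.one_lt_omega0)
  · intro γ hγ _
    have h1 : theta γ ≤ sSup (theta '' Set.Iio β) :=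
      le_csSup Ordinal.bddAbove_of_small ⟨γ, hγ, rfl⟩
    exact lt_of_lt_of_le (lt_of_le_of_lt (h1.trans (le_max_right _ _)) (Order.lt_succ M))
      (Ordinal.right_le_opow _ Ordinal.one_lt_omega0)

lemma theta_mem (β : Ordinal.{0}) : theta β ∈ Sset β := by
  rw [theta_eq]; exact csInf_mem (Sset_nonempty β)

lemma theta_le {β ζ : Ordinal.{0}} (h : ζ ∈ Sset β) : theta β ≤ ζ := by
  rw [theta_eq]; exact csInf_le (OrderBot.bddBelow _) h

lemma kMax_lt_theta (β : Ordinal.{0}) : kMax β < theta β := (theta_mem β).2.1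

lemma theta_injective : Function.Injective theta := by
  intro a b h
  rcases lt_trichotomy a b with hab | hab | hab
  · exfalso
    have h2 : kMax a < theta b := h ▸ kMax_lt_theta a
    have := (theta_mem b).2.2 a hab h2
    rw [h] at this; exact lt_irrefl _ this
  · exact hab
  · exfalso
    have h2 : kMax b < theta a := h ▸ kMax_lt_theta b
    have := (theta_mem a).2.2 b hab h2
    rw [h] at this; exact lt_irrefl _ this

lemma kMem_zero {x : Ordinal.{0}} (h : KMem x 0) : x = 0 := by
  cases h with
  | zero => rfl
  | coeff hm => rw [Ordinal.CNF.zero_right] at hm; exact absurd hm List.not_mem_nil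
  | expo hm _ => rw [Ordinal.CNF.zero_right] at hm; exact absurd hm List.not_mem_nil

lemma kMax_zero : kMax 0 = 0 := by
  have : {β : Ordinal.{0} | KMem β 0} = {0} := by
    ext x; constructor
    · exact fun h => kMem_zero h
    · rintro rfl; exact KMem.zero
  rw [kMax, this, csSup_singleton]

lemma CNF_Omega1_opow (t : Ordinal.{0}) :
    Ordinal.CNF Omega1 (Omega1 ^ t) = [(t, 1)] := by
  have h0 : Omega1 ^ t ≠ 0 := (Ordinal.opow_pos t Omega1_pos).ne'
  rw [Ordinal.CNF.ne_zero h0, Ordinal.log_opow one_lt_Omega1, Ordinal.div_self h0,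
    Ordinal.mod_self, Ordinal.CNF.zero_right]

lemma kMem_opow {x t : Ordinal.{0}} (h : KMem x (Omega1 ^ t)) : x = 1 ∨ KMem x t := by
  generalize hq : Omega1 ^ t = q at h
  cases h with
  | zero => exact absurd hq (Ordinal.opow_pos t Omega1_pos).ne'
  | coeff hm =>
      subst hq
      rw [CNF_Omega1_opow, List.mem_singleton, Prod.mk.injEq] at hm
      exact Or.inl hm.2
  | expo hm hk =>
      subst hq
      rw [CNF_Omega1_opow, List.mem_singleton, Prod.mk.injEq] at hm
      exact Or.inr (hm.1 ▸ hk)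

lemma kMem_tower {x : Ordinal.{0}} : ∀ n : ℕ, KMem x (OmegaTower n) → x ≤ 1 := by
  intro n
  induction n with
  | zero =>
      intro h
      have h1 : KMem x (Omega1 ^ (0 : Ordinal)) := by rwa [Ordinal.opow_zero]
      rcases kMem_opow h1 with rfl | h2
      · exact le_refl 1
      · exact (kMem_zero h2) ▸ zero_le_one
  | succ n IH =>
      intro h
      rcases kMem_opow h with rfl | h2
      · exact le_refl 1
      · exact IH h2

lemma kMax_tower (n : ℕ) : kMax (OmegaTower n) ≤ 1 :=
  csSup_le' fun _ hx => kMem_tower n hx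

lemma theta_zero : theta 0 = 1 := by
  apply le_antisymm
  · apply theta_le
    refine ⟨⟨0, (Ordinal.opow_zero _).symm⟩, ?_, ?_⟩
    · rw [kMax_zero]; exact zero_lt_one
    · intro γ hγ; exact absurd hγ (by simp : ¬ γ < 0)
  · have := kMax_lt_theta 0
    rw [kMax_zero] at this
    exact Order.one_le_iff_pos.mpr this

lemma exists_Omega1_opow : ∃ o : Ordinal.{0}, Omega1 = Ordinal.omega0 ^ o := by
  have h := Ordinal.isPrincipal_add_ord (Cardinal.aleph0_le_aleph 1)
  rcases Ordinal.principal_add_iff_zero_or_omega0_opow.mp h with h0 | h1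
  · exact absurd h0 Omega1_pos.ne'
  · obtain ⟨o, ho⟩ := h1
    exact ⟨o, ho.symm⟩

lemma tower_lt_eps (n : ℕ) : OmegaTower n < epsOmega1 := by
  obtain ⟨o, ho⟩ := exists_Omega1_opow
  have heps : Ordinal.omega0 ^ epsOmega1 = epsOmega1 :=
    Ordinal.nfp_fp (Ordinal.isNormal_opow Ordinal.one_lt_omega0) (Omega1 + 1)
  have hΩeps : Omega1 < epsOmega1 :=
    lt_of_lt_of_le (Order.lt_succ Omega1) (by
      rw [← Ordinal.add_one_eq_succ]; exact Ordinal.le_nfp _ _)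
  have hmul : Ordinal.Principal (· * ·) epsOmega1 := by
    have : epsOmega1 = Ordinal.omega0 ^ Ordinal.omega0 ^ epsOmega1 := by
      conv_lhs => rw [← heps, ← heps]
    rw [this]
    exact Ordinal.principal_mul_omega0_opow_opow _
  have ho_lt : o < epsOmega1 :=
    lt_of_le_of_lt (ho ▸ Ordinal.right_le_opow o Ordinal.one_lt_omega0) hΩeps
  induction n with
  | zero => exact lt_trans one_lt_Omega1 hΩeps
  | succ n IH =>
      show Omega1 ^ OmegaTower n < epsOmega1
      rw [ho, ← Ordinal.opow_mul]
      calc Ordinal.omega0 ^ (o * OmegaTower n)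
          < Ordinal.omega0 ^ epsOmega1 :=
            (Ordinal.opow_lt_opow_iff_right Ordinal.one_lt_omega0).mpr (hmul ho_lt IH)
        _ = epsOmega1 := heps

lemma lt_opow_self_of_lt_tower : ∀ (n : ℕ) {γ : Ordinal.{0}},
    γ < OmegaTower n → γ < Omega1 ^ γ := by
  intro n
  induction n with
  | zero =>
      intro γ h
      rw [show OmegaTower 0 = 1 from rfl, Ordinal.lt_one_iff_zero] at h
      rw [h, Ordinal.opow_zero]
      exact zero_lt_one
  | succ n IH =>
      intro γ h
      rcases lt_or_ge γ (OmegaTower n) with h1 | h1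
      · exact IH h1
      · exact lt_of_lt_of_le h (Ordinal.opow_le_opow_right Omega1_pos h1)

lemma tower_lt_succ (n : ℕ) : OmegaTower n < OmegaTower (n + 1) := by
  induction n with
  | zero =>
      show (1 : Ordinal) < Omega1 ^ (1 : Ordinal)
      rw [Ordinal.opow_one]; exact one_lt_Omega1
  | succ n IH =>
      exact (Ordinal.opow_lt_opow_iff_right one_lt_Omega1).mpr IH

lemma exists_theta_eq {α : Ordinal.{0}} (hP : AddClosed α) :
    ∀ β : Ordinal.{0}, kMax β < α → α ≤ theta β →
      ∃ γ : Ordinal.{0}, γ ≤ β ∧ kMax γ < α ∧ theta γ = α := by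
  intro β
  induction β using Ordinal.induction with
  | h β IH =>
    intro hk hle
    rcases hle.lt_or_eq with hlt | heq
    · have hnot : α ∉ Sset β := fun hmem => absurd (theta_le hmem) (not_le.mpr hlt)
      have hcl : ¬ ∀ (γ : Ordinal.{0}) (_ : γ < β), kMax γ < α → theta γ < α := by
        intro hcl; exact hnot ⟨hP, hk, hcl⟩
      push_neg at hcl
      obtain ⟨γ, hγβ, hγk, hγθ⟩ := hcl
      obtain ⟨δ, hδγ, hδk, hδθ⟩ := IH γ hγβ hγk hγθ
      exact ⟨δ, hδγ.trans hγβ.le, hδk, hδθ⟩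
    · exact ⟨β, le_refl β, hk, heq.symm⟩

/-- every additively closed ordinal `α < ϑ(ε_{Ω+1})` is uniquely of the
form `ϑ(β)` with either `β = 0`, or `β ≠ 0`, `β < ε_{Ω+1}`, the base-`Ω` Cantor normal
form of `β` has all exponents `< β` and coefficients in `(0, Ω)`, and `k(β) < α`. -/
theorem stmt19 (α : Ordinal.{0}) (hP : AddClosed α) (hα : α < HowardBachmann) :
    ∃! β : Ordinal.{0},
      (β = 0 ∨
        (β ≠ 0 ∧ β < epsOmega1 ∧
          (∀ pr ∈ Ordinal.CNF Omega1 β, pr.1 < β ∧ 0 < pr.2 ∧ pr.2 < Omega1) ∧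
          kMax β < α)) ∧
      α = theta β := by
  rcases eq_or_ne α 1 with rfl | hne
  · refine ⟨0, ⟨Or.inl rfl, theta_zero.symm⟩, ?_⟩
    rintro y ⟨-, hy⟩
    exact theta_injective (hy.symm.trans theta_zero.symm)
  · have h1α : 1 < α := by
      obtain ⟨ξ, rfl⟩ := hP
      have hξ : ξ ≠ 0 := by rintro rfl; exact hne (Ordinal.opow_zero _)
      calc (1 : Ordinal) = Ordinal.omega0 ^ (0 : Ordinal) := (Ordinal.opow_zero _).symm
        _ < Ordinal.omega0 ^ ξ := (Ordinal.opow_lt_opow_iff_right Ordinal.one_lt_omega0).mpr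
            (pos_iff_ne_zero.mpr hξ)
    rw [HowardBachmann, Ordinal.lt_iSup_iff] at hα
    obtain ⟨n, hn⟩ := hα
    have hk : kMax (OmegaTower n) < α := lt_of_le_of_lt (kMax_tower n) h1α
    obtain ⟨γ, hγle, hγk, hγθ⟩ := exists_theta_eq hP (OmegaTower n) hk hn.le
    refine ⟨γ, ⟨?_, hγθ.symm⟩, ?_⟩
    · rcases eq_or_ne γ 0 with rfl | hγ0
      · exact Or.inl rfl
      · refine Or.inr ⟨hγ0, hγle.trans_lt (tower_lt_eps n), ?_, hγk⟩
        intro pr hpr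
        refine ⟨?_, Ordinal.CNF.snd_pos hpr, Ordinal.CNF.snd_lt one_lt_Omega1 hpr⟩
        have h1 : pr.1 ≤ Ordinal.log Omega1 γ := Ordinal.CNF.fst_le_log hpr
        have h2 : Omega1 ^ Ordinal.log Omega1 γ ≤ γ := Ordinal.opow_log_le_self _ hγ0
        have h3 : γ < Omega1 ^ γ :=
          lt_opow_self_of_lt_tower (n + 1) (lt_of_le_of_lt hγle (tower_lt_succ n))
        exact lt_of_le_of_lt h1
          ((Ordinal.opow_lt_opow_iff_right one_lt_Omega1).mp (lt_of_le_of_lt h2 h3))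
    · rintro y ⟨-, hy⟩
      exact theta_injective (hy.symm.trans hγθ.symm)
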